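/- As s → +∞, Γ(s+1) = (s/e)^s √(2πs) · [1 + 1/(12s) + 1/(288s²) - 139/(51840s³) - 571/(2488320s⁴) + 163879/(209018880s⁵) + o(1/s⁵)]. -/

import Mathlib

open Real Filter Asymptotics Topology
set_option maxHeartbeats 2000000

noncomputable def Spsi (x : ℝ) : ℝ := 1/(12*x) - 1/(360*x^3) + 1/(1260*x^5)
noncomputable def SA (x : ℝ) : ℝ := x * Real.log x - x + Real.log (2*Real.pi*x)/2
noncomputable def Sh (x : ℝ) : ℝ := Real.log (Real.Gamma (x+1)) - SA x
noncomputable def Sphi (x : ℝ) : ℝ := (x + 1/2) * (Real.log (x+1) - Real.log x) - 1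

lemma certB (x : ℝ) (hx : 1 ≤ x) :
    |(x + 1/2) * ((1/(x+1)) ^ 1 / 1 + (1/(x+1)) ^ 2 / 2 + (1/(x+1)) ^ 3 / 3 + (1/(x+1)) ^ 4 / 4 + (1/(x+1)) ^ 5 / 5 + (1/(x+1)) ^ 6 / 6 + (1/(x+1)) ^ 7 / 7 + (1/(x+1)) ^ 8 / 8) - 1 - (Spsi x - Spsi (x+1))| ≤ 1/6/x^8 := by
  have hx0 : (0:ℝ) < x := lt_of_lt_of_le one_pos hx
  have hx1 : (0:ℝ) < x + 1 := by linarith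
  have ht : (0:ℝ) ≤ x - 1 := by linarith
  have hxne : x ≠ 0 := hx0.ne'
  have hx1ne : x + 1 ≠ 0 := hx1.ne'
  have hden : (0:ℝ) < x^13 * (x+1)^8 := by positivity
  have key1 : 1/6/x^8 - ((x + 1/2) * ((1/(x+1)) ^ 1 / 1 + (1/(x+1)) ^ 2 / 2 + (1/(x+1)) ^ 3 / 3 + (1/(x+1)) ^ 4 / 4 + (1/(x+1)) ^ 5 / 5 + (1/(x+1)) ^ 6 / 6 + (1/(x+1)) ^ 7 / 7 + (1/(x+1)) ^ 8 / 8) - 1 - (Spsi x - Spsi (x+1))) = ((43235:ℝ)/1008 + (1949141:ℝ)/5040 * (x - 1) ^ 1 + (200849:ℝ)/126 * (x - 1) ^ 2 + (159133:ℝ)/40 * (x - 1) ^ 3 + (536929:ℝ)/80 * (x - 1) ^ 4 + (5824877:ℝ)/720 * (x - 1) ^ 5 + (646067:ℝ)/90 * (x - 1) ^ 6 + (5994389:ℝ)/1260 * (x - 1) ^ 7 + (11904709:ℝ)/5040 * (x - 1) ^ 8 + (1464049:ℝ)/1680 * (x - 1) ^ 9 + (1168:ℝ)/5 * (x - 1)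 ^ 10 + (15629:ℝ)/360 * (x - 1) ^ 11 + (3643:ℝ)/720 * (x - 1) ^ 12 + (203:ℝ)/720 * (x - 1) ^ 13) / (x^13 * (x+1)^8) := by
    simp only [Spsi]
    field_simp
    ring
  have key2 : 1/6/x^8 + ((x + 1/2) * ((1/(x+1)) ^ 1 / 1 + (1/(x+1)) ^ 2 / 2 + (1/(x+1)) ^ 3 / 3 + (1/(x+1)) ^ 4 / 4 + (1/(x+1)) ^ 5 / 5 + (1/(x+1)) ^ 6 / 6 + (1/(x+1)) ^ 7 / 7 + (1/(x+1)) ^ 8 / 8) - 1 - (Spsi x - Spsi (x+1))) = ((42781:ℝ)/1008 + (1921579:ℝ)/5040 * (x - 1) ^ 1 + (196975:ℝ)/126 * (x - 1) ^ 2 + (464681:ℝ)/120 * (x - 1) ^ 3 + (1550813:ℝ)/240 * (x - 1) ^ 4 + (5518483:ℝ)/720 * (x - 1) ^ 5 + (597613:ℝ)/90 * (x - 1) ^ 6 + (5348971:ℝ)/1260 * (x - 1) ^ 7 + (10057931:ℝ)/5040 * (x - 1) ^ 8 + (1137151:ℝ)/1680 * (x - 1) ^ 9 + (2386:ℝ)/15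 * (x - 1) ^ 10 + (8611:ℝ)/360 * (x - 1) ^ 11 + (1397:ℝ)/720 * (x - 1) ^ 12 + (37:ℝ)/720 * (x - 1) ^ 13) / (x^13 * (x+1)^8) := by
    simp only [Spsi]
    field_simp
    ring
  have hQ1 : (0:ℝ) ≤ ((43235:ℝ)/1008 + (1949141:ℝ)/5040 * (x - 1) ^ 1 + (200849:ℝ)/126 * (x - 1) ^ 2 + (159133:ℝ)/40 * (x - 1) ^ 3 + (536929:ℝ)/80 * (x - 1) ^ 4 + (5824877:ℝ)/720 * (x - 1) ^ 5 + (646067:ℝ)/90 * (x - 1) ^ 6 + (5994389:ℝ)/1260 * (x - 1) ^ 7 + (11904709:ℝ)/5040 * (x - 1) ^ 8 + (1464049:ℝ)/1680 * (x - 1) ^ 9 + (1168:ℝ)/5 * (x - 1) ^ 10 + (15629:ℝ)/360 * (x - 1) ^ 11 + (3643:ℝ)/720 * (x - 1) ^ 12 + (203:ℝ)/720 * (x - 1) ^ 13) := by linarith [mul_nonneg (show (0:ℝ) ≤ (1949141:ℝ)/5040 by norm_num) (pow_nonneg ht 1), mul_nonneg (show (0:ℝ) ≤ (200849:ℝ)/126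 by norm_num) (pow_nonneg ht 2), mul_nonneg (show (0:ℝ) ≤ (159133:ℝ)/40 by norm_num) (pow_nonneg ht 3), mul_nonneg (show (0:ℝ) ≤ (536929:ℝ)/80 by norm_num) (pow_nonneg ht 4), mul_nonneg (show (0:ℝ) ≤ (5824877:ℝ)/720 by norm_num) (pow_nonneg ht 5), mul_nonneg (show (0:ℝ) ≤ (646067:ℝ)/90 by norm_num) (pow_nonneg ht 6), mul_nonneg (show (0:ℝ) ≤ (5994389:ℝ)/1260 by norm_num) (pow_nonneg ht 7), mul_nonneg (show (0:ℝ) ≤ (11904709:ℝ)/5040 by norm_num) (pow_nonneg ht 8), mul_nonneg (show (0:ℝ) ≤ (1464049:ℝ)/1680 by norm_num) (pow_nonneg ht 9), mul_nonneg (show (0:ℝ) ≤ (1168:ℝ)/5 by norm_num) (pow_nonneg ht 10), mul_nonneg (show (0:ℝ) ≤ (15629:ℝ)/360 by norm_num) (pow_nonneg ht 11), mul_nonneg (show (0:ℝ) ≤ (3643:ℝ)/720 by norm_num) (pow_nonneg ht 12), mul_nonneg (show (0:ℝ) ≤ (203:ℝ)/720 by norm_num) (pow_nonneg ht 13)]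
  have hQ2 : (0:ℝ) ≤ ((42781:ℝ)/1008 + (1921579:ℝ)/5040 * (x - 1) ^ 1 + (196975:ℝ)/126 * (x - 1) ^ 2 + (464681:ℝ)/120 * (x - 1) ^ 3 + (1550813:ℝ)/240 * (x - 1) ^ 4 + (5518483:ℝ)/720 * (x - 1) ^ 5 + (597613:ℝ)/90 * (x - 1) ^ 6 + (5348971:ℝ)/1260 * (x - 1) ^ 7 + (10057931:ℝ)/5040 * (x - 1) ^ 8 + (1137151:ℝ)/1680 * (x - 1) ^ 9 + (2386:ℝ)/15 * (x - 1) ^ 10 + (8611:ℝ)/360 * (x - 1) ^ 11 + (1397:ℝ)/720 * (x - 1) ^ 12 + (37:ℝ)/720 * (x - 1) ^ 13) := by linarith [mul_nonneg (show (0:ℝ) ≤ (1921579:ℝ)/5040 by norm_num) (pow_nonneg ht 1), mul_nonneg (show (0:ℝ) ≤ (196975:ℝ)/126 by norm_num) (pow_nonneg ht 2), mul_nonneg (show (0:ℝ) ≤ (464681:ℝ)/120 by norm_num) (pow_nonneg ht 3), mul_nonneg (show (0:ℝ) ≤ (1550813:ℝ)/240 by norm_num) (pow_nonneg ht 4), mul_nonneg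 (show (0:ℝ) ≤ (5518483:ℝ)/720 by norm_num) (pow_nonneg ht 5), mul_nonneg (show (0:ℝ) ≤ (597613:ℝ)/90 by norm_num) (pow_nonneg ht 6), mul_nonneg (show (0:ℝ) ≤ (5348971:ℝ)/1260 by norm_num) (pow_nonneg ht 7), mul_nonneg (show (0:ℝ) ≤ (10057931:ℝ)/5040 by norm_num) (pow_nonneg ht 8), mul_nonneg (show (0:ℝ) ≤ (1137151:ℝ)/1680 by norm_num) (pow_nonneg ht 9), mul_nonneg (show (0:ℝ) ≤ (2386:ℝ)/15 by norm_num) (pow_nonneg ht 10), mul_nonneg (show (0:ℝ) ≤ (8611:ℝ)/360 by norm_num) (pow_nonneg ht 11), mul_nonneg (show (0:ℝ) ≤ (1397:ℝ)/720 by norm_num) (pow_nonneg ht 12), mul_nonneg (show (0:ℝ) ≤ (37:ℝ)/720 by norm_num) (pow_nonneg ht 13)]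
  have h1 : (0:ℝ) ≤ 1/6/x^8 - ((x + 1/2) * ((1/(x+1)) ^ 1 / 1 + (1/(x+1)) ^ 2 / 2 + (1/(x+1)) ^ 3 / 3 + (1/(x+1)) ^ 4 / 4 + (1/(x+1)) ^ 5 / 5 + (1/(x+1)) ^ 6 / 6 + (1/(x+1)) ^ 7 / 7 + (1/(x+1)) ^ 8 / 8) - 1 - (Spsi x - Spsi (x+1))) := key1 ▸ div_nonneg hQ1 hden.le
  have h2 : (0:ℝ) ≤ 1/6/x^8 + ((x + 1/2) * ((1/(x+1)) ^ 1 / 1 + (1/(x+1)) ^ 2 / 2 + (1/(x+1)) ^ 3 / 3 + (1/(x+1)) ^ 4 / 4 + (1/(x+1)) ^ 5 / 5 + (1/(x+1)) ^ 6 / 6 + (1/(x+1)) ^ 7 / 7 + (1/(x+1)) ^ 8 / 8) - 1 - (Spsi x - Spsi (x+1))) := key2 ▸ div_nonneg hQ2 hden.le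
  rw [abs_le]
  constructor <;> linarith


lemma certE (x : ℝ) (hx : 1 ≤ x) :
    |((Spsi x) ^ 0 / 1 + (Spsi x) ^ 1 / 1 + (Spsi x) ^ 2 / 2 + (Spsi x) ^ 3 / 6 + (Spsi x) ^ 4 / 24 + (Spsi x) ^ 5 / 120) - (1 + 1 / (12 * x) + 1 / (288 * x ^ 2) - 139 / (51840 * x ^ 3) - 571 / (2488320 * x ^ 4) + 163879 / (209018880 * x ^ 5))| ≤ 1/10000/x^6 := by
  have hx0 : (0:ℝ) < x := lt_of_lt_of_le one_pos hx
  have hx1 : (0:ℝ) < x + 1 := by linarith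
  have ht : (0:ℝ) ≤ x - 1 := by linarith
  have hxne : x ≠ 0 := hx0.ne'
  have hx1ne : x + 1 ≠ 0 := hx1.ne'
  have hden : (0:ℝ) < x^31 := by positivity
  have key1 : 1/10000/x^6 - (((Spsi x) ^ 0 / 1 + (Spsi x) ^ 1 / 1 + (Spsi x) ^ 2 / 2 + (Spsi x) ^ 3 / 6 + (Spsi x) ^ 4 / 24 + (Spsi x) ^ 5 / 120) - (1 + 1 / (12 * x) + 1 / (288 * x ^ 2) - 139 / (51840 * x ^ 3) - 571 / (2488320 * x ^ 4) + 163879 / (209018880 * x ^ 5))) = ((14226287585411:ℝ)/487802409615360000 + (1777462145237:ℝ)/2439012048076800 * (x - 1) ^ 1 + (21320962439117:ℝ)/2439012048076800 * (x - 1) ^ 2 + (102130091736487:ℝ)/1524382530048000 * (x - 1) ^ 3 + (17970906532843973:ℝ)/48780240961536000 * (x - 1) ^ 4 + (1572289601013163177:ℝ)/1016255020032000000 * (x - 1) ^ 5 + (31446698134802486177:ℝ)/6097530120192000000 * (x - 1) ^ 6 + (148874297850221:ℝ)/10633248675000 * (x - 1) ^ 7 + (1372492290025807889:ℝ)/43553786572800000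 * (x - 1) ^ 8 + (5187644111476430599:ℝ)/87107573145600000 * (x - 1) ^ 9 + (1318422383295523553:ℝ)/13826598912000000 * (x - 1) ^ 10 + (28341589698216242971:ℝ)/217768932864000000 * (x - 1) ^ 11 + (756611434035596203:ℝ)/4977575608320000 * (x - 1) ^ 12 + (631341658701917227:ℝ)/4147979673600000 * (x - 1) ^ 13 + (3251901494695953527:ℝ)/24887878041600000 * (x - 1) ^ 14 + (1493087664892400743:ℝ)/15554923776000000 * (x - 1) ^ 15 + (14960689521576374893:ℝ)/248878780416000000 * (x - 1) ^ 16 + (1260004439197807:ℝ)/39504568320000 * (x - 1) ^ 17 + (3368295331686899:ℝ)/237027409920000 * (x - 1) ^ 18 + (34563976837937:ℝ)/6584094720000 * (x - 1) ^ 19 + (6239789027287:ℝ)/3950456832000 * (x - 1) ^ 20 + (24839596451:ℝ)/65840947200 * (x - 1) ^ 21 + (6473801671:ℝ)/94058496000 * (x - 1) ^ 22 + (4708199:ℝ)/522547200 * (x - 1) ^ 23 + (945271:ℝ)/1254113280 * (x - 1) ^ 24 + (98867:ℝ)/3265920000 * (x - 1) ^ 25) / (x^31) := by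
    simp only [Spsi]
    field_simp
    ring
  have key2 : 1/10000/x^6 + (((Spsi x) ^ 0 / 1 + (Spsi x) ^ 1 / 1 + (Spsi x) ^ 2 / 2 + (Spsi x) ^ 3 / 6 + (Spsi x) ^ 4 / 24 + (Spsi x) ^ 5 / 120) - (1 + 1 / (12 * x) + 1 / (288 * x ^ 2) - 139 / (51840 * x ^ 3) - 571 / (2488320 * x ^ 4) + 163879 / (209018880 * x ^ 5))) = ((83334194337661:ℝ)/487802409615360000 + (10417598095147:ℝ)/2439012048076800 * (x - 1) ^ 1 + (125019760445491:ℝ)/2439012048076800 * (x - 1) ^ 2 + (599085872085593:ℝ)/1524382530048000 * (x - 1) ^ 3 + (105443103099842107:ℝ)/48780240961536000 * (x - 1) ^ 4 + (9226436241846868823:ℝ)/1016255020032000000 * (x - 1) ^ 5 + (184527818722398153823:ℝ)/6097530120192000000 * (x - 1) ^ 6 + (873406229764279:ℝ)/10633248675000 * (x - 1) ^ 7 + (8048845052469424111:ℝ)/43553786572800000 * (x - 1) ^ 8 + (30404074737950001401:ℝ)/87107573145600000 * (x - 1) ^ 9 + (7720744308622300447:ℝ)/13826598912000000 * (x - 1)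 ^ 10 + (165795058571382477029:ℝ)/217768932864000000 * (x - 1) ^ 11 + (4420365853153702997:ℝ)/4977575608320000 * (x - 1) ^ 12 + (3682806080622498773:ℝ)/4147979673600000 * (x - 1) ^ 13 + (18935144021829614473:ℝ)/24887878041600000 * (x - 1) ^ 14 + (8675974863515151257:ℝ)/15554923776000000 * (x - 1) ^ 15 + (86729935762499145107:ℝ)/248878780416000000 * (x - 1) ^ 16 + (7285426256942993:ℝ)/39504568320000 * (x - 1) ^ 17 + (19419519858021901:ℝ)/237027409920000 * (x - 1) ^ 18 + (198644658144463:ℝ)/6584094720000 * (x - 1) ^ 19 + (7147553053909:ℝ)/790091366400 * (x - 1) ^ 20 + (28347599993:ℝ)/13168189440 * (x - 1) ^ 21 + (36793106489:ℝ)/94058496000 * (x - 1) ^ 22 + (26644633:ℝ)/522547200 * (x - 1) ^ 23 + (26626477:ℝ)/6270566400 * (x - 1) ^ 24 + (554317:ℝ)/3265920000 * (x - 1) ^ 25) / (x^31) := by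
    simp only [Spsi]
    field_simp
    ring
  have hQ1 : (0:ℝ) ≤ ((14226287585411:ℝ)/487802409615360000 + (1777462145237:ℝ)/2439012048076800 * (x - 1) ^ 1 + (21320962439117:ℝ)/2439012048076800 * (x - 1) ^ 2 + (102130091736487:ℝ)/1524382530048000 * (x - 1) ^ 3 + (17970906532843973:ℝ)/48780240961536000 * (x - 1) ^ 4 + (1572289601013163177:ℝ)/1016255020032000000 * (x - 1) ^ 5 + (31446698134802486177:ℝ)/6097530120192000000 * (x - 1) ^ 6 + (148874297850221:ℝ)/10633248675000 * (x - 1) ^ 7 + (1372492290025807889:ℝ)/43553786572800000 * (x - 1) ^ 8 + (5187644111476430599:ℝ)/87107573145600000 * (x - 1) ^ 9 + (1318422383295523553:ℝ)/13826598912000000 * (x - 1) ^ 10 + (28341589698216242971:ℝ)/217768932864000000 * (x - 1) ^ 11 + (756611434035596203:ℝ)/4977575608320000 * (x - 1) ^ 12 + (631341658701917227:ℝ)/4147979673600000 * (x - 1) ^ 13 + (3251901494695953527:ℝ)/24887878041600000 * (x - 1) ^ 14 + (1493087664892400743:ℝ)/15554923776000000 * (x - 1) ^ 15 + (14960689521576374893:ℝ)/248878780416000000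 * (x - 1) ^ 16 + (1260004439197807:ℝ)/39504568320000 * (x - 1) ^ 17 + (3368295331686899:ℝ)/237027409920000 * (x - 1) ^ 18 + (34563976837937:ℝ)/6584094720000 * (x - 1) ^ 19 + (6239789027287:ℝ)/3950456832000 * (x - 1) ^ 20 + (24839596451:ℝ)/65840947200 * (x - 1) ^ 21 + (6473801671:ℝ)/94058496000 * (x - 1) ^ 22 + (4708199:ℝ)/522547200 * (x - 1) ^ 23 + (945271:ℝ)/1254113280 * (x - 1) ^ 24 + (98867:ℝ)/3265920000 * (x - 1) ^ 25) := by linarith [mul_nonneg (show (0:ℝ) ≤ (1777462145237:ℝ)/2439012048076800 by norm_num) (pow_nonneg ht 1), mul_nonneg (show (0:ℝ) ≤ (21320962439117:ℝ)/2439012048076800 by norm_num) (pow_nonneg ht 2), mul_nonneg (show (0:ℝ) ≤ (102130091736487:ℝ)/1524382530048000 by norm_num) (pow_nonneg ht 3), mul_nonneg (show (0:ℝ) ≤ (17970906532843973:ℝ)/48780240961536000 by norm_num) (pow_nonneg ht 4), mul_nonneg (show (0:ℝ) ≤ (1572289601013163177:ℝ)/1016255020032000000 by norm_num) (pow_nonneg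 ht 5), mul_nonneg (show (0:ℝ) ≤ (31446698134802486177:ℝ)/6097530120192000000 by norm_num) (pow_nonneg ht 6), mul_nonneg (show (0:ℝ) ≤ (148874297850221:ℝ)/10633248675000 by norm_num) (pow_nonneg ht 7), mul_nonneg (show (0:ℝ) ≤ (1372492290025807889:ℝ)/43553786572800000 by norm_num) (pow_nonneg ht 8), mul_nonneg (show (0:ℝ) ≤ (5187644111476430599:ℝ)/87107573145600000 by norm_num) (pow_nonneg ht 9), mul_nonneg (show (0:ℝ) ≤ (1318422383295523553:ℝ)/13826598912000000 by norm_num) (pow_nonneg ht 10), mul_nonneg (show (0:ℝ) ≤ (28341589698216242971:ℝ)/217768932864000000 by norm_num) (pow_nonneg ht 11), mul_nonneg (show (0:ℝ) ≤ (756611434035596203:ℝ)/4977575608320000 by norm_num) (pow_nonneg ht 12), mul_nonneg (show (0:ℝ) ≤ (631341658701917227:ℝ)/4147979673600000 by norm_num) (pow_nonneg ht 13), mul_nonneg (show (0:ℝ) ≤ (3251901494695953527:ℝ)/24887878041600000 by norm_num) (pow_nonneg ht 14), mul_nonneg (show (0:ℝ) ≤ (1493087664892400743:ℝ)/15554923776000000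 by norm_num) (pow_nonneg ht 15), mul_nonneg (show (0:ℝ) ≤ (14960689521576374893:ℝ)/248878780416000000 by norm_num) (pow_nonneg ht 16), mul_nonneg (show (0:ℝ) ≤ (1260004439197807:ℝ)/39504568320000 by norm_num) (pow_nonneg ht 17), mul_nonneg (show (0:ℝ) ≤ (3368295331686899:ℝ)/237027409920000 by norm_num) (pow_nonneg ht 18), mul_nonneg (show (0:ℝ) ≤ (34563976837937:ℝ)/6584094720000 by norm_num) (pow_nonneg ht 19), mul_nonneg (show (0:ℝ) ≤ (6239789027287:ℝ)/3950456832000 by norm_num) (pow_nonneg ht 20), mul_nonneg (show (0:ℝ) ≤ (24839596451:ℝ)/65840947200 by norm_num) (pow_nonneg ht 21), mul_nonneg (show (0:ℝ) ≤ (6473801671:ℝ)/94058496000 by norm_num) (pow_nonneg ht 22), mul_nonneg (show (0:ℝ) ≤ (4708199:ℝ)/522547200 by norm_num) (pow_nonneg ht 23), mul_nonneg (show (0:ℝ) ≤ (945271:ℝ)/1254113280 by norm_num) (pow_nonneg ht 24), mul_nonneg (show (0:ℝ) ≤ (98867:ℝ)/3265920000 by norm_num) (pow_nonneg ht 25)]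
  have hQ2 : (0:ℝ) ≤ ((83334194337661:ℝ)/487802409615360000 + (10417598095147:ℝ)/2439012048076800 * (x - 1) ^ 1 + (125019760445491:ℝ)/2439012048076800 * (x - 1) ^ 2 + (599085872085593:ℝ)/1524382530048000 * (x - 1) ^ 3 + (105443103099842107:ℝ)/48780240961536000 * (x - 1) ^ 4 + (9226436241846868823:ℝ)/1016255020032000000 * (x - 1) ^ 5 + (184527818722398153823:ℝ)/6097530120192000000 * (x - 1) ^ 6 + (873406229764279:ℝ)/10633248675000 * (x - 1) ^ 7 + (8048845052469424111:ℝ)/43553786572800000 * (x - 1) ^ 8 + (30404074737950001401:ℝ)/87107573145600000 * (x - 1) ^ 9 + (7720744308622300447:ℝ)/13826598912000000 * (x - 1) ^ 10 + (165795058571382477029:ℝ)/217768932864000000 * (x - 1) ^ 11 + (4420365853153702997:ℝ)/4977575608320000 * (x - 1) ^ 12 + (3682806080622498773:ℝ)/4147979673600000 * (x - 1) ^ 13 + (18935144021829614473:ℝ)/24887878041600000 * (x - 1) ^ 14 + (8675974863515151257:ℝ)/15554923776000000 * (x - 1) ^ 15 + (86729935762499145107:ℝ)/248878780416000000 * (x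 - 1) ^ 16 + (7285426256942993:ℝ)/39504568320000 * (x - 1) ^ 17 + (19419519858021901:ℝ)/237027409920000 * (x - 1) ^ 18 + (198644658144463:ℝ)/6584094720000 * (x - 1) ^ 19 + (7147553053909:ℝ)/790091366400 * (x - 1) ^ 20 + (28347599993:ℝ)/13168189440 * (x - 1) ^ 21 + (36793106489:ℝ)/94058496000 * (x - 1) ^ 22 + (26644633:ℝ)/522547200 * (x - 1) ^ 23 + (26626477:ℝ)/6270566400 * (x - 1) ^ 24 + (554317:ℝ)/3265920000 * (x - 1) ^ 25) := by linarith [mul_nonneg (show (0:ℝ) ≤ (10417598095147:ℝ)/2439012048076800 by norm_num) (pow_nonneg ht 1), mul_nonneg (show (0:ℝ) ≤ (125019760445491:ℝ)/2439012048076800 by norm_num) (pow_nonneg ht 2), mul_nonneg (show (0:ℝ) ≤ (599085872085593:ℝ)/1524382530048000 by norm_num) (pow_nonneg ht 3), mul_nonneg (show (0:ℝ) ≤ (105443103099842107:ℝ)/48780240961536000 by norm_num) (pow_nonneg ht 4), mul_nonneg (show (0:ℝ) ≤ (9226436241846868823:ℝ)/1016255020032000000 by norm_num) (pow_nonneg ht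 5), mul_nonneg (show (0:ℝ) ≤ (184527818722398153823:ℝ)/6097530120192000000 by norm_num) (pow_nonneg ht 6), mul_nonneg (show (0:ℝ) ≤ (873406229764279:ℝ)/10633248675000 by norm_num) (pow_nonneg ht 7), mul_nonneg (show (0:ℝ) ≤ (8048845052469424111:ℝ)/43553786572800000 by norm_num) (pow_nonneg ht 8), mul_nonneg (show (0:ℝ) ≤ (30404074737950001401:ℝ)/87107573145600000 by norm_num) (pow_nonneg ht 9), mul_nonneg (show (0:ℝ) ≤ (7720744308622300447:ℝ)/13826598912000000 by norm_num) (pow_nonneg ht 10), mul_nonneg (show (0:ℝ) ≤ (165795058571382477029:ℝ)/217768932864000000 by norm_num) (pow_nonneg ht 11), mul_nonneg (show (0:ℝ) ≤ (4420365853153702997:ℝ)/4977575608320000 by norm_num) (pow_nonneg ht 12), mul_nonneg (show (0:ℝ) ≤ (3682806080622498773:ℝ)/4147979673600000 by norm_num) (pow_nonneg ht 13), mul_nonneg (show (0:ℝ) ≤ (18935144021829614473:ℝ)/24887878041600000 by norm_num) (pow_nonneg ht 14), mul_nonneg (show (0:ℝ) ≤ (8675974863515151257:ℝ)/15554923776000000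 by norm_num) (pow_nonneg ht 15), mul_nonneg (show (0:ℝ) ≤ (86729935762499145107:ℝ)/248878780416000000 by norm_num) (pow_nonneg ht 16), mul_nonneg (show (0:ℝ) ≤ (7285426256942993:ℝ)/39504568320000 by norm_num) (pow_nonneg ht 17), mul_nonneg (show (0:ℝ) ≤ (19419519858021901:ℝ)/237027409920000 by norm_num) (pow_nonneg ht 18), mul_nonneg (show (0:ℝ) ≤ (198644658144463:ℝ)/6584094720000 by norm_num) (pow_nonneg ht 19), mul_nonneg (show (0:ℝ) ≤ (7147553053909:ℝ)/790091366400 by norm_num) (pow_nonneg ht 20), mul_nonneg (show (0:ℝ) ≤ (28347599993:ℝ)/13168189440 by norm_num) (pow_nonneg ht 21), mul_nonneg (show (0:ℝ) ≤ (36793106489:ℝ)/94058496000 by norm_num) (pow_nonneg ht 22), mul_nonneg (show (0:ℝ) ≤ (26644633:ℝ)/522547200 by norm_num) (pow_nonneg ht 23), mul_nonneg (show (0:ℝ) ≤ (26626477:ℝ)/6270566400 by norm_num) (pow_nonneg ht 24), mul_nonneg (show (0:ℝ) ≤ (554317:ℝ)/3265920000 by norm_num) (pow_nonneg ht 25)]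
  have h1 : (0:ℝ) ≤ 1/10000/x^6 - (((Spsi x) ^ 0 / 1 + (Spsi x) ^ 1 / 1 + (Spsi x) ^ 2 / 2 + (Spsi x) ^ 3 / 6 + (Spsi x) ^ 4 / 24 + (Spsi x) ^ 5 / 120) - (1 + 1 / (12 * x) + 1 / (288 * x ^ 2) - 139 / (51840 * x ^ 3) - 571 / (2488320 * x ^ 4) + 163879 / (209018880 * x ^ 5))) := key1 ▸ div_nonneg hQ1 hden.le
  have h2 : (0:ℝ) ≤ 1/10000/x^6 + (((Spsi x) ^ 0 / 1 + (Spsi x) ^ 1 / 1 + (Spsi x) ^ 2 / 2 + (Spsi x) ^ 3 / 6 + (Spsi x) ^ 4 / 24 + (Spsi x) ^ 5 / 120) - (1 + 1 / (12 * x) + 1 / (288 * x ^ 2) - 139 / (51840 * x ^ 3) - 571 / (2488320 * x ^ 4) + 163879 / (209018880 * x ^ 5))) := key2 ▸ div_nonneg hQ2 hden.le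
  rw [abs_le]
  constructor <;> linarith


lemma Sh_rec {x : ℝ} (hx : 0 < x) : Sh x = Sphi x + Sh (x+1) := by
  have hx1 : (0:ℝ) < x + 1 := by linarith
  have hG : Real.Gamma (x + 1 + 1) = (x+1) * Real.Gamma (x+1) := Real.Gamma_add_one hx1.ne'
  have hGpos : 0 < Real.Gamma (x+1) := Real.Gamma_pos_of_pos hx1
  have hlogG : Real.log (Real.Gamma (x+1+1)) = Real.log (x+1) + Real.log (Real.Gamma (x+1)) := by
    rw [hG, Real.log_mul hx1.ne' hGpos.ne']
  have h2pi : (0:ℝ) < 2 * Real.pi := by positivity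
  have hl1 : Real.log (2*Real.pi*(x+1)) = Real.log (2*Real.pi) + Real.log (x+1) :=
    Real.log_mul h2pi.ne' hx1.ne'
  have hl2 : Real.log (2*Real.pi*x) = Real.log (2*Real.pi) + Real.log x :=
    Real.log_mul h2pi.ne' hx.ne'
  simp only [Sh, SA, Sphi, hlogG, hl1, hl2]
  ring

lemma Sdelta_bound {x : ℝ} (hx : 1 ≤ x) :
    |Sphi x - (Spsi x - Spsi (x+1))| ≤ 2/x^8 := by
  have hx0 : (0:ℝ) < x := lt_of_lt_of_le one_pos hx
  have hx1 : (0:ℝ) < x + 1 := by linarith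
  set z : ℝ := 1/(x+1) with hz
  have hz0 : 0 < z := by positivity
  have hz1 : z < 1 := by
    rw [hz, div_lt_one hx1]; linarith
  have habs : |z| < 1 := by rw [abs_of_pos hz0]; exact hz1
  have hlog := Real.abs_log_sub_add_sum_range_le habs 8
  have hsum : (∑ i ∈ Finset.range 8, z ^ (i + 1) / ((i:ℝ) + 1))
      = z ^ 1 / 1 + z ^ 2 / 2 + z ^ 3 / 3 + z ^ 4 / 4 + z ^ 5 / 5 + z ^ 6 / 6 + z ^ 7 / 7 + z ^ 8 / 8 := by
    simp [Finset.sum_range_succ]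
    norm_num
  set S : ℝ := z ^ 1 / 1 + z ^ 2 / 2 + z ^ 3 / 3 + z ^ 4 / 4 + z ^ 5 / 5 + z ^ 6 / 6 + z ^ 7 / 7 + z ^ 8 / 8 with hS
  have h1z : 1 - z = x / (x+1) := by
    rw [hz]; field_simp; ring
  have hlog2 : Real.log (1 - z) = Real.log x - Real.log (x+1) := by
    rw [h1z, Real.log_div hx0.ne' hx1.ne']
  have hE : |S - (Real.log (x+1) - Real.log x)| ≤ z^9 / (1 - z) := by
    rw [hsum, hlog2] at hlog
    rw [abs_of_pos hz0] at hlog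
    calc |S - (Real.log (x+1) - Real.log x)| = |S + (Real.log x - Real.log (x+1))| := by ring_nf
    _ ≤ z ^ (8+1) / (1 - z) := hlog
    _ = z^9/(1-z) := by norm_num
  have hzval : z^9/(1-z) = 1/((x+1)^8 * x) := by
    rw [hz]
    field_simp
    ring
    exact mul_inv_cancel₀ hx0.ne'
  have hterm : (x + 1/2) * (z^9/(1-z)) ≤ 1/x^8 := by
    rw [hzval, mul_one_div, div_le_div_iff₀ (by positivity) (by positivity)]
    have hpow : (x+1)^8 ≥ x^8 + 8*x^7 := by nlinarith [pow_nonneg hx0.le 2, pow_nonneg hx0.le 3, pow_nonneg hx0.le 4, pow_nonneg hx0.le 5, pow_nonneg hx0.le 6, pow_nonneg hx0.le 7]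
    have hpow2 : (x+1)^8 * x ≥ (x^8 + 8*x^7) * x := mul_le_mul_of_nonneg_right hpow hx0.le
    nlinarith [pow_pos hx0 8, pow_pos hx0 7]
  have hM := certB x hx
  have hiden : Sphi x - (Spsi x - Spsi (x+1))
      = ((x + 1/2) * S - 1 - (Spsi x - Spsi (x+1))) - (x + 1/2) * (S - (Real.log (x+1) - Real.log x)) := by
    simp only [Sphi]; ring
  rw [hiden]
  have h8 : (0:ℝ) < x^8 := by positivity
  calc |((x + 1/2) * S - 1 - (Spsi x - Spsi (x+1))) - (x + 1/2) * (S - (Real.log (x+1) - Real.log x))|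
      ≤ |(x + 1/2) * S - 1 - (Spsi x - Spsi (x+1))| + |(x + 1/2) * (S - (Real.log (x+1) - Real.log x))| := abs_sub _ _
    _ ≤ 1/6/x^8 + (x + 1/2) * (z^9/(1-z)) := by
        refine add_le_add ?_ ?_
        · rw [hS, hz] at *; exact hM
        · rw [abs_mul, abs_of_pos (by linarith : (0:ℝ) < x + 1/2)]
          exact mul_le_mul_of_nonneg_left hE (by linarith)
    _ ≤ 1/6/x^8 + 1/x^8 := by linarith [hterm]
    _ ≤ 2/x^8 := by
        rw [show 1/6/x^8 + 1/x^8 = (7/6)/x^8 by ring]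
        gcongr
        norm_num

lemma sum_phi (x : ℝ) (hx : 0 < x) (n : ℕ) :
    Sh x = (∑ k ∈ Finset.range n, Sphi (x + k)) + Sh (x + n) := by
  induction n with
  | zero => simp
  | succ n ih =>
    have h2 : Sh (x + n) = Sphi (x + n) + Sh (x + n + 1) := Sh_rec (by positivity)
    rw [Finset.sum_range_succ]
    push_cast
    rw [ih, h2]
    ring_nf

lemma sum_inv8 (x : ℝ) (hx : 1 ≤ x) (n : ℕ) :
    (∑ k ∈ Finset.range n, 1/(x + k)^8) ≤ 1/x^8 + 1/(7*x^7) := by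
  have hx0 : (0:ℝ) < x := by linarith
  have key : ∀ m : ℕ, (∑ k ∈ Finset.range (m+1), 1/(x + k)^8)
      ≤ 1/x^8 + 1/(7*x^7) - 1/(7*(x+m)^7) := by
    intro m
    induction m with
    | zero => simp
    | succ m ih =>
      rw [Finset.sum_range_succ]
      have ha : (0:ℝ) < x + m := by positivity
      have ha1 : (0:ℝ) < x + m + 1 := by linarith
      have step : 1/(x + m + 1)^8 ≤ 1/(7*(x+m)^7) - 1/(7*(x+m+1)^7) := by
        have key2 : 1/(7*(x+m)^7) - 1/(7*(x+m+1)^7) - 1/(x+m+1)^8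
            = (28*(x+m)^6+56*(x+m)^5+70*(x+m)^4+56*(x+m)^3+28*(x+m)^2+8*(x+m)+1)
              / (7*(x+m)^7*(x+m+1)^8) := by
          field_simp
          ring
        have h1 : (0:ℝ) ≤ (28*(x+m)^6+56*(x+m)^5+70*(x+m)^4+56*(x+m)^3+28*(x+m)^2+8*(x+m)+1)
              / (7*(x+m)^7*(x+m+1)^8) := by positivity
        linarith [key2 ▸ h1]
      push_cast
      rw [show x + ((m:ℝ)+1) = x + m + 1 by ring]
      linarith
  cases n with
  | zero =>
    simp
    positivity
  | succ m =>
    have := key m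
    have h7 : (0:ℝ) < 7*(x + m)^7 := by positivity
    have : 0 < 1/(7*(x+m)^7) := by positivity
    linarith [key m]

lemma Spsi_tendsto : Tendsto Spsi atTop (𝓝 0) := by
  have h1 : Tendsto (fun x : ℝ => 1/(12*x)) atTop (𝓝 0) :=
    Tendsto.div_atTop tendsto_const_nhds (Tendsto.const_mul_atTop (by norm_num) tendsto_id)
  have h3 : Tendsto (fun x : ℝ => 1/(360*x^3)) atTop (𝓝 0) :=
    Tendsto.div_atTop tendsto_const_nhds (Tendsto.const_mul_atTop (by norm_num) (tendsto_pow_atTop (by norm_num)))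
  have h5 : Tendsto (fun x : ℝ => 1/(1260*x^5)) atTop (𝓝 0) :=
    Tendsto.div_atTop tendsto_const_nhds (Tendsto.const_mul_atTop (by norm_num) (tendsto_pow_atTop (by norm_num)))
  have hfun : Spsi = fun x : ℝ => 1/(12*x) - 1/(360*x^3) + 1/(1260*x^5) := rfl
  rw [hfun]
  simpa using (h1.sub h3).add h5

lemma Sh_nat (m : ℕ) (hm : 1 ≤ m) : Sh m = Real.log (Stirling.stirlingSeq m / Real.sqrt Real.pi) := by
  have hm0 : (0:ℝ) < m := by exact_mod_cast hm
  have hfac : (0:ℝ) < (Nat.factorial m : ℝ) := by exact_mod_cast m.factorial_pos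
  have hsq : (0:ℝ) < Real.sqrt (2*m) := Real.sqrt_pos.mpr (by positivity)
  have hme : (0:ℝ) < (m : ℝ)/Real.exp 1 := by positivity
  have hpow : (0:ℝ) < ((m:ℝ)/Real.exp 1)^m := pow_pos hme m
  have hpi : (0:ℝ) < Real.sqrt Real.pi := Real.sqrt_pos.mpr Real.pi_pos
  have hG : Real.Gamma ((m:ℝ) + 1) = (Nat.factorial m : ℝ) := Real.Gamma_nat_eq_factorial m
  rw [Stirling.stirlingSeq, Real.log_div (by positivity) hpi.ne', Real.log_div hfac.ne' (by positivity),
    Real.log_mul hsq.ne' hpow.ne', Real.log_pow, Real.log_div hm0.ne' (Real.exp_pos 1).ne',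
    Real.log_sqrt (by positivity : (0:ℝ) ≤ 2*m), Real.log_sqrt Real.pi_pos.le, Real.log_exp]
  simp only [Sh, SA, hG]
  have h1 : Real.log (2*Real.pi*m) = Real.log (2*m) + Real.log Real.pi := by
    rw [show 2*Real.pi*(m:ℝ) = (2*m)*Real.pi by ring, Real.log_mul (by positivity) Real.pi_pos.ne']
  rw [h1]
  ring

lemma Sh_nat_tendsto : Tendsto (fun m : ℕ => Sh m) atTop (𝓝 0) := by
  have hpi : (0:ℝ) < Real.sqrt Real.pi := Real.sqrt_pos.mpr Real.pi_pos
  have h1 : Tendsto (fun m : ℕ => Stirling.stirlingSeq m / Real.sqrt Real.pi) atTop (𝓝 1) := by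
    have h := Stirling.tendsto_stirlingSeq_sqrt_pi.div_const (Real.sqrt Real.pi)
    rwa [div_self hpi.ne'] at h
  have h2 : Tendsto (fun m : ℕ => Real.log (Stirling.stirlingSeq m / Real.sqrt Real.pi)) atTop (𝓝 0) := by
    have hc : ContinuousAt Real.log 1 := Real.continuousAt_log one_ne_zero
    have := hc.tendsto.comp h1
    simpa [Function.comp_def] using this
  refine h2.congr' ?_
  filter_upwards [eventually_ge_atTop 1] with m hm
  exact (Sh_nat m hm).symm

lemma log_ratio_le {a b : ℝ} (ha : 0 < a) (hab : a ≤ b) : Real.log b - Real.log a ≤ (b-a)/a := by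
  have hb : 0 < b := lt_of_lt_of_le ha hab
  have h := Real.log_le_sub_one_of_pos (show 0 < b/a by positivity)
  rw [Real.log_div hb.ne' ha.ne'] at h
  have : b/a - 1 = (b-a)/a := by field_simp
  linarith [this ▸ h]

lemma log_ratio_ge {a b : ℝ} (ha : 0 < a) (hab : a ≤ b) : (b-a)/b ≤ Real.log b - Real.log a := by
  have hb : 0 < b := lt_of_lt_of_le ha hab
  have h := Real.log_le_sub_one_of_pos (show 0 < a/b by positivity)
  rw [Real.log_div ha.ne' hb.ne'] at h
  have : a/b - 1 = -((b-a)/b) := by field_simp; ring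
  linarith [this ▸ h]

lemma Sh_interp {y : ℝ} (hy : 2 ≤ y) : |Sh y - Sh (⌊y⌋₊ : ℝ)| ≤ 2/(⌊y⌋₊ : ℝ) := by
  set m : ℝ := (⌊y⌋₊ : ℝ) with hmdef
  have hy0 : (0:ℝ) ≤ y := by linarith
  have hm2 : (2:ℝ) ≤ m := by
    have h2' : (2:ℕ) ≤ ⌊y⌋₊ := Nat.le_floor (by exact_mod_cast hy)
    rw [hmdef]
    exact_mod_cast h2'
  have hm0 : (0:ℝ) < m := by linarith
  have hmy : m ≤ y := Nat.floor_le hy0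
  have hym : y < m + 1 := Nat.lt_floor_add_one y
  clear_value m
  set t : ℝ := y - m with htdef
  have ht0 : 0 ≤ t := by simp [htdef]; linarith
  have ht1 : t < 1 := by simp [htdef]; linarith
  clear_value t
  rcases eq_or_lt_of_le ht0 with h0 | h0
  · have : y = m := by simp [htdef] at h0; linarith
    rw [this]
    simp
    positivity
  -- main case 0 < t
  have hGm : 0 < Real.Gamma m := Real.Gamma_pos_of_pos hm0
  set f : ℝ → ℝ := fun u => Real.log (Real.Gamma u) with hf
  have hfm1 : f (m+1) - f m = Real.log m := by
    rw [hf]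
    simp only
    rw [Real.Gamma_add_one hm0.ne', Real.log_mul hm0.ne' hGm.ne']
    ring
  have hfm2 : f (m+2) - f (m+1) = Real.log (m+1) := by
    rw [hf]
    simp only
    have hm1 : (0:ℝ) < m + 1 := by linarith
    have hGm1 : 0 < Real.Gamma (m+1) := Real.Gamma_pos_of_pos hm1
    rw [show m + 2 = (m+1)+1 by ring, Real.Gamma_add_one hm1.ne', Real.log_mul hm1.ne' hGm1.ne']
    ring
  have hmem : ∀ u : ℝ, 0 < u → u ∈ Set.Ioi (0:ℝ) := fun u hu => hu
  have slope1 := Real.convexOn_log_Gamma.slope_mono_adjacent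
    (hmem m hm0) (hmem (y+1) (by linarith)) (show m < m+1 by linarith) (show m+1 < y+1 by linarith)
  have slope2 := Real.convexOn_log_Gamma.slope_mono_adjacent
    (hmem (m+1) (by linarith)) (hmem (m+2) (by linarith)) (show m+1 < y+1 by linarith) (show y+1 < m+2 by linarith)
  -- slope1 : (f(m+1) - f(m))/(m+1-m) ≤ (f(y+1)-f(m+1))/(y+1-(m+1))
  simp only [Function.comp_apply] at slope1 slope2
  set s : ℝ := Real.log (Real.Gamma (y+1)) - Real.log (Real.Gamma (m+1)) with hs
  clear_value s
  have hlo : t * Real.log m ≤ s := by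
    have h1 : (Real.log (Real.Gamma (m+1)) - Real.log (Real.Gamma m))/(m+1-m) ≤ s/(y+1-(m+1)) := slope1
    have h2 : Real.log m ≤ s/t := by
      have e1 : m+1-m = 1 := by ring
      have e2 : y+1-(m+1) = t := by rw [htdef]; ring
      rw [e1, e2] at h1
      calc Real.log m = (f (m+1) - f m)/1 := by rw [hfm1]; ring
        _ ≤ s/t := h1
    calc t * Real.log m ≤ t * (s/t) := by nlinarith [h2]
      _ = s := by field_simp
  have hhi : s ≤ t * Real.log (m+1) := by
    have h1 : s/(y+1-(m+1)) ≤ (Real.log (Real.Gamma (m+2)) - Real.log (Real.Gamma (y+1)))/(m+2-(y+1)) := slope2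
    have e2 : y+1-(m+1) = t := by rw [htdef]; ring
    have e3 : m+2-(y+1) = 1-t := by rw [htdef]; ring
    rw [e2, e3] at h1
    have hlog1 : Real.log (Real.Gamma (m+2)) - Real.log (Real.Gamma (y+1)) = Real.log (m+1) - s := by
      have := hfm2
      rw [hf] at this
      simp only at this
      rw [hs]
      linarith
    rw [hlog1] at h1
    have h1t : 0 < 1 - t := by linarith
    rw [div_le_div_iff₀ h0 h1t] at h1
    nlinarith [h1]
  -- now the A-part
  have hL_le : Real.log y - Real.log m ≤ t/m := by
    have hh := log_ratio_le hm0 hmy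
    rw [← htdef] at hh
    exact hh
  have hL_ge : t/y ≤ Real.log y - Real.log m := by
    have hh := log_ratio_ge hm0 hmy
    rw [← htdef] at hh
    exact hh
  have hApart : Sh y - Sh m = s - (t * Real.log m + (y + 1/2) * (Real.log y - Real.log m) - t) := by
    simp only [Sh, SA, hs]
    have hpy : Real.log (2*Real.pi*y) = Real.log (2*Real.pi) + Real.log y :=
      Real.log_mul (by positivity) (by linarith)
    have hpm : Real.log (2*Real.pi*m) = Real.log (2*Real.pi) + Real.log m :=
      Real.log_mul (by positivity) hm0.ne'
    rw [hpy, hpm, htdef]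
    ring
  -- combine
  have hy0' : (0:ℝ) < y := by linarith
  set L : ℝ := Real.log y - Real.log m with hLdef
  clear_value L
  have hupper : Sh y - Sh m ≤ 2/m := by
    rw [hApart]
    have h1 : s ≤ t * Real.log (m+1) := hhi
    have hL1 : Real.log (m+1) - Real.log m ≤ 1/m := by
      have := log_ratio_le hm0 (by linarith : m ≤ m+1)
      simpa using this
    have h3 : (y + 1/2) * (t/y) ≤ (y + 1/2) * L :=
      mul_le_mul_of_nonneg_left hL_ge (by linarith)
    have h3' : t ≤ (y + 1/2) * L := by
      have hA : t ≤ (y+1/2) * (t/y) := by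
        rw [← sub_nonneg]
        have he : (y+1/2)*(t/y) - t = t/(2*y) := by field_simp; ring
        rw [he]; positivity
      linarith
    have h5 : t * Real.log (m+1) - t * Real.log m ≤ t * (1/m) := by
      nlinarith [ht0, hL1]
    have h6 : t * (1/m) ≤ 1/m := by
      have h1m : 0 < 1/m := by positivity
      nlinarith
    have h8 : (0:ℝ) < 1/m := by positivity
    have h9 : 2/m - 1/m = 1/m := by ring
    linarith [h1, h3', h5, h6]
  have hlower : -(2/m) ≤ Sh y - Sh m := by
    rw [hApart]
    have h2 : (y + 1/2) * L ≤ (y + 1/2) * (t/m) := by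
      apply mul_le_mul_of_nonneg_left hL_le (by linarith)
    have hyeq : y = m + t := by rw [htdef]; ring
    have hB : (y + 1/2) * (t/m) = t + (t*(t+1/2))/m := by
      rw [hyeq]; field_simp; ring
    have hC : t*(t+1/2)/m ≤ (3/2)/m := by
      gcongr
      nlinarith
    have h8 : (0:ℝ) < 1/m := by positivity
    have h9 : (3/2)/m ≤ 2/m := by
      rw [div_le_div_iff₀ hm0 hm0]
      nlinarith
    linarith [hlo, h2, hB, hC]
  rw [abs_le]
  constructor <;> linarith

lemma Sh_tendsto : Tendsto Sh atTop (𝓝 0) := by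
  have hnat : Tendsto (fun m : ℕ => |Sh m| + 2/(m:ℝ)) atTop (𝓝 0) := by
    have h1 : Tendsto (fun m : ℕ => |Sh m|) atTop (𝓝 0) := by
      have := Sh_nat_tendsto.abs
      simpa using this
    have h2 : Tendsto (fun m : ℕ => 2/(m:ℝ)) atTop (𝓝 0) :=
      tendsto_const_div_atTop_nhds_zero_nat 2
    simpa using h1.add h2
  apply squeeze_zero_norm' (a := fun y : ℝ => |Sh ((⌊y⌋₊ : ℝ))| + 2/((⌊y⌋₊ : ℝ)))
  · filter_upwards [eventually_ge_atTop (2:ℝ)] with y hy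
    have hint := Sh_interp hy
    have : |Sh y| ≤ |Sh ((⌊y⌋₊:ℝ))| + |Sh y - Sh ((⌊y⌋₊:ℝ))| := by
      have := abs_add_le (Sh ((⌊y⌋₊:ℝ))) (Sh y - Sh ((⌊y⌋₊:ℝ)))
      simpa using this
    calc ‖Sh y‖ = |Sh y| := rfl
      _ ≤ |Sh ((⌊y⌋₊:ℝ))| + 2/((⌊y⌋₊:ℝ)) := by linarith
  · exact hnat.comp tendsto_nat_floor_atTop

lemma Sh_sub_psi {x : ℝ} (hx : 1 ≤ x) : |Sh x - Spsi x| ≤ 3/x^7 := by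
  have hx0 : (0:ℝ) < x := by linarith
  have hpart : ∀ n : ℕ, |(Sh x - Spsi x) - (Sh (x+n) - Spsi (x+n))| ≤ 3/x^7 := by
    intro n
    have e1 := sum_phi x hx0 n
    have e2 : (∑ k ∈ Finset.range n, (Spsi (x+k) - Spsi (x+k+1))) = Spsi x - Spsi (x+n) := by
      have H := Finset.sum_range_sub' (fun k : ℕ => Spsi (x + k)) n
      simp only [Nat.cast_zero, add_zero, Nat.cast_add, Nat.cast_one] at H
      rw [← H]
      apply Finset.sum_congr rfl
      intro k _
      have harg : x + (k:ℝ) + 1 = x + ((k:ℝ)+1) := by ring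
      rw [harg]
    have e3 : (Sh x - Spsi x) - (Sh (x+n) - Spsi (x+n))
        = ∑ k ∈ Finset.range n, (Sphi (x+k) - (Spsi (x+k) - Spsi (x+k+1))) := by
      rw [Finset.sum_sub_distrib, e2]
      linarith [e1]
    rw [e3]
    calc |∑ k ∈ Finset.range n, (Sphi (x+k) - (Spsi (x+k) - Spsi (x+k+1)))|
        ≤ ∑ k ∈ Finset.range n, |Sphi (x+k) - (Spsi (x+k) - Spsi (x+k+1))| :=
          Finset.abs_sum_le_sum_abs _ _
      _ ≤ ∑ k ∈ Finset.range n, 2/(x+k)^8 := by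
          apply Finset.sum_le_sum
          intro k _
          have hxk : 1 ≤ x + k := by
            have : (0:ℝ) ≤ k := Nat.cast_nonneg k
            linarith
          exact Sdelta_bound hxk
      _ = 2 * ∑ k ∈ Finset.range n, 1/(x+k)^8 := by
          rw [Finset.mul_sum]
          apply Finset.sum_congr rfl
          intro k _
          ring
      _ ≤ 2 * (1/x^8 + 1/(7*x^7)) := by
          have := sum_inv8 x hx n
          linarith
      _ ≤ 3/x^7 := by
          have h87 : 1/x^8 ≤ 1/x^7 := by
            apply one_div_le_one_div_of_le (by positivity)
            calc x^7 = x^7 * 1 := by ring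
              _ ≤ x^7 * x := by
                  apply mul_le_mul_of_nonneg_left hx (by positivity)
              _ = x^8 := by ring
          have e4 : 1/(7*x^7) = (1/7) * (1/x^7) := by ring
          have e5 : 3/x^7 = 3 * (1/x^7) := by ring
          have h7 : (0:ℝ) ≤ 1/x^7 := by positivity
          linarith
  have hlim : Tendsto (fun n : ℕ => (Sh x - Spsi x) - (Sh (x+n) - Spsi (x+n))) atTop
      (𝓝 (Sh x - Spsi x)) := by
    have hxn : Tendsto (fun n : ℕ => x + (n:ℝ)) atTop atTop :=
      tendsto_atTop_add_const_left atTop x tendsto_natCast_atTop_atTop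
    have h1 : Tendsto (fun n : ℕ => Sh (x+n)) atTop (𝓝 0) := Sh_tendsto.comp hxn
    have h2 : Tendsto (fun n : ℕ => Spsi (x+n)) atTop (𝓝 0) := Spsi_tendsto.comp hxn
    have h3 := (h1.sub h2)
    have h4 : Tendsto (fun _ : ℕ => Sh x - Spsi x) atTop (𝓝 (Sh x - Spsi x)) := tendsto_const_nhds
    have := h4.sub h3
    simpa using this
  have habs : Tendsto (fun n : ℕ => |(Sh x - Spsi x) - (Sh (x+n) - Spsi (x+n))|) atTop
      (𝓝 |Sh x - Spsi x|) := hlim.abs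
  exact le_of_tendsto habs (Eventually.of_forall hpart)

lemma Spsi_nonneg {x : ℝ} (hx : 1 ≤ x) : 0 ≤ Spsi x := by
  have hx0 : (0:ℝ) < x := by linarith
  have k1 : Spsi x = (210*x^4 - 7*x^2 + 2)/(2520*x^5) := by
    simp only [Spsi]; field_simp; ring
  rw [k1]
  apply div_nonneg _ (by positivity)
  nlinarith [sq_nonneg x, sq_nonneg (x^2 - 1)]

lemma Spsi_le {x : ℝ} (hx : 1 ≤ x) : Spsi x ≤ 1/(6*x) := by
  have hx0 : (0:ℝ) < x := by linarith
  have k2 : 1/(6*x) - Spsi x = (210*x^4 + 7*x^2 - 2)/(2520*x^5) := by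
    simp only [Spsi]; field_simp; ring
  have h : (0:ℝ) ≤ (210*x^4 + 7*x^2 - 2)/(2520*x^5) := by
    apply div_nonneg _ (by positivity)
    nlinarith [sq_nonneg x, sq_nonneg (x^2-1)]
  linarith [k2 ▸ h]

lemma Sexp {x : ℝ} (hx : 0 < x) :
    Real.Gamma (x+1) / ((x/Real.exp 1)^x * Real.sqrt (2*Real.pi*x)) = Real.exp (Sh x) := by
  have hG : 0 < Real.Gamma (x+1) := Real.Gamma_pos_of_pos (by linarith)
  have h1 : ((x/Real.exp 1) ^ x : ℝ) = Real.exp ((Real.log x - 1) * x) := by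
    rw [Real.rpow_def_of_pos (by positivity), Real.log_div hx.ne' (Real.exp_ne_zero 1),
      Real.log_exp]
  have h2 : Real.sqrt (2*Real.pi*x) = Real.exp (Real.log (2*Real.pi*x)/2) := by
    rw [← Real.log_sqrt (by positivity), Real.exp_log (Real.sqrt_pos.mpr (by positivity))]
  rw [Sh, SA, Real.exp_sub, Real.exp_log hG, h1, h2, ← Real.exp_add]
  congr 2
  ring

lemma main_bound {x : ℝ} (hx : 2 ≤ x) :
    |Real.Gamma (x+1) / ((x/Real.exp 1)^x * Real.sqrt (2*Real.pi*x))
      - (1 + 1 / (12 * x) + 1 / (288 * x ^ 2) - 139 / (51840 * x ^ 3) -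
            571 / (2488320 * x ^ 4) + 163879 / (209018880 * x ^ 5))| ≤ 11/x^6 := by
  have hx1 : (1:ℝ) ≤ x := by linarith
  have hx0 : (0:ℝ) < x := by linarith
  rw [Sexp hx0]
  set P : ℝ := 1 + 1 / (12 * x) + 1 / (288 * x ^ 2) - 139 / (51840 * x ^ 3) -
            571 / (2488320 * x ^ 4) + 163879 / (209018880 * x ^ 5) with hP
  set T : ℝ := (Spsi x) ^ 0 / 1 + (Spsi x) ^ 1 / 1 + (Spsi x) ^ 2 / 2 + (Spsi x) ^ 3 / 6
      + (Spsi x) ^ 4 / 24 + (Spsi x) ^ 5 / 120 with hT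
  -- part (a)
  have hr : |Sh x - Spsi x| ≤ 3/x^7 := Sh_sub_psi hx1
  have hx7 : (128:ℝ) ≤ x^7 := by
    calc (128:ℝ) = 2^7 := by norm_num
      _ ≤ x^7 := pow_le_pow_left₀ (by norm_num) hx 7
  have hr1 : |Sh x - Spsi x| ≤ 1 := by
    refine hr.trans ?_
    rw [div_le_one (by positivity)]
    linarith
  have hpsi_le := Spsi_le hx1
  have hpsi_nn := Spsi_nonneg hx1
  have h16 : 1/(6*x) ≤ 1 := by
    rw [div_le_one (by positivity)]
    linarith
  have hexp_psi : Real.exp (Spsi x) ≤ 3 := by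
    calc Real.exp (Spsi x) ≤ Real.exp 1 := Real.exp_le_exp.mpr (by linarith)
      _ ≤ 3 := by linarith [Real.exp_one_lt_d9]
  have ha0 : Real.exp (Sh x) - Real.exp (Spsi x)
      = Real.exp (Spsi x) * (Real.exp (Sh x - Spsi x) - 1) := by
    rw [mul_sub, ← Real.exp_add, mul_one, show Spsi x + (Sh x - Spsi x) = Sh x by ring]
  have ha : |Real.exp (Sh x) - Real.exp (Spsi x)| ≤ 9/x^6 := by
    rw [ha0, abs_mul, abs_of_pos (Real.exp_pos _)]
    have h1 : |Real.exp (Sh x - Spsi x) - 1| ≤ 2 * |Sh x - Spsi x| :=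
      Real.abs_exp_sub_one_le hr1
    calc Real.exp (Spsi x) * |Real.exp (Sh x - Spsi x) - 1|
        ≤ 3 * (2 * (3/x^7)) := by
          apply mul_le_mul hexp_psi (h1.trans (by linarith)) (abs_nonneg _) (by norm_num)
      _ = 18/x^7 := by ring
      _ ≤ 9/x^6 := by
          rw [div_le_div_iff₀ (by positivity) (by positivity)]
          nlinarith [pow_pos hx0 6]
  -- part (b)
  have hpsi1 : |Spsi x| ≤ 1 := by
    rw [abs_of_nonneg hpsi_nn]
    linarith
  have hb0 := Real.exp_bound hpsi1 (by norm_num : 0 < 6)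
  have hsum : (∑ m ∈ Finset.range 6, (Spsi x) ^ m / (Nat.factorial m : ℝ)) = T := by
    rw [hT]
    simp [Finset.sum_range_succ, Nat.factorial]
    try norm_num
  have hb : |Real.exp (Spsi x) - T| ≤ 1/x^6 := by
    rw [← hsum]
    refine hb0.trans ?_
    have h6 : |Spsi x|^6 * ((6:ℕ).succ / ((Nat.factorial 6 : ℝ) * 6)) ≤ |Spsi x|^6 := by
      have : ((6:ℕ).succ / ((Nat.factorial 6 : ℝ) * 6)) ≤ 1 := by
        norm_num [Nat.factorial]
      nlinarith [pow_nonneg (abs_nonneg (Spsi x)) 6]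
    refine h6.trans ?_
    have h7 : |Spsi x| ≤ 1/(6*x) := by rw [abs_of_nonneg hpsi_nn]; exact hpsi_le
    have h8 : |Spsi x|^6 ≤ (1/(6*x))^6 := pow_le_pow_left₀ (abs_nonneg _) h7 6
    refine h8.trans ?_
    rw [div_pow, one_pow, div_le_div_iff₀ (by positivity) (by positivity)]
    nlinarith [pow_pos hx0 6]
  -- part (c)
  have hc : |T - P| ≤ 1/10000/x^6 := certE x hx1
  -- combine
  have htotal : |Real.exp (Sh x) - P| ≤ 9/x^6 + 1/x^6 + 1/10000/x^6 := by
    calc |Real.exp (Sh x) - P|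
        = |(Real.exp (Sh x) - Real.exp (Spsi x)) + ((Real.exp (Spsi x) - T) + (T - P))| := by
          congr 1; ring
      _ ≤ |Real.exp (Sh x) - Real.exp (Spsi x)| + |(Real.exp (Spsi x) - T) + (T - P)| :=
          abs_add_le _ _
      _ ≤ |Real.exp (Sh x) - Real.exp (Spsi x)| + (|Real.exp (Spsi x) - T| + |T - P|) := by
          linarith [abs_add_le (Real.exp (Spsi x) - T) (T - P)]
      _ ≤ 9/x^6 + 1/x^6 + 1/10000/x^6 := by linarith
  refine htotal.trans ?_
  rw [← add_div, ← add_div]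
  gcongr
  norm_num

theorem stmt_19 :
    (fun s : ℝ =>
        Real.Gamma (s + 1) / ((s / Real.exp 1) ^ s * Real.sqrt (2 * Real.pi * s)) -
          (1 + 1 / (12 * s) + 1 / (288 * s ^ 2) - 139 / (51840 * s ^ 3) -
            571 / (2488320 * s ^ 4) + 163879 / (209018880 * s ^ 5)))
      =o[Filter.atTop] fun s : ℝ => 1 / s ^ 5 := by
  have hO : (fun s : ℝ =>
        Real.Gamma (s + 1) / ((s / Real.exp 1) ^ s * Real.sqrt (2 * Real.pi * s)) -
          (1 + 1 / (12 * s) + 1 / (288 * s ^ 2) - 139 / (51840 * s ^ 3) -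
            571 / (2488320 * s ^ 4) + 163879 / (209018880 * s ^ 5)))
      =O[Filter.atTop] fun s : ℝ => 1 / s ^ 6 := by
    rw [isBigO_iff]
    refine ⟨11, ?_⟩
    filter_upwards [eventually_ge_atTop (2:ℝ)] with x hx
    have hx0 : (0:ℝ) < x := by linarith
    have := main_bound hx
    rw [Real.norm_eq_abs, Real.norm_eq_abs, abs_of_pos (show (0:ℝ) < 1/x^6 by positivity)]
    calc |Real.Gamma (x + 1) / ((x / Real.exp 1) ^ x * Real.sqrt (2 * Real.pi * x)) -
          (1 + 1 / (12 * x) + 1 / (288 * x ^ 2) - 139 / (51840 * x ^ 3) -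
            571 / (2488320 * x ^ 4) + 163879 / (209018880 * x ^ 5))| ≤ 11/x^6 := this
      _ = 11 * (1/x^6) := by ring
  have ho : (fun s : ℝ => 1/s^6) =o[Filter.atTop] fun s : ℝ => 1/s^5 := by
    rw [isLittleO_iff]
    intro c hc
    filter_upwards [eventually_ge_atTop (max 1 (1/c))] with x hx
    have hx1 : (1:ℝ) ≤ x := le_trans (le_max_left _ _) hx
    have hxc : 1/c ≤ x := le_trans (le_max_right _ _) hx
    have hx0 : (0:ℝ) < x := by linarith
    rw [Real.norm_eq_abs, Real.norm_eq_abs, abs_of_pos (show (0:ℝ) < 1/x^6 by positivity),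
      abs_of_pos (show (0:ℝ) < 1/x^5 by positivity)]
    have hcx : 1 ≤ c * x := by
      rw [div_le_iff₀ hc] at hxc
      linarith [hxc]
    rw [div_le_iff₀ (by positivity), show c * (1/x^5) * x^6 = (c*x) * (x^5 * (1/x^5)) by ring,
      mul_one_div, div_self (by positivity : (x:ℝ)^5 ≠ 0), mul_one]
    exact hcx
  exact hO.trans_isLittleO ho
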